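/- If q = (q: E → M, σ, ζ, λ) is a differential bundle in a tangent category, then T(q) := (T(q): TE → TM, T(σ), T(ζ), T(λ)c) is again a differential bundle. -/

import Mathlib

open CategoryTheory CategoryTheory.Limits

universe v u

variable {C : Type u} [Category.{v} C]

/-- Iterated power of an endofunctor. -/
def fpow (T : C ⥤ C) : ℕ → C ⥤ C
  | 0 => 𝟭 C
  | n + 1 => fpow T n ⋙ T

/-- Tangent structure on a category (Cockett–Cruttwell). -/
structure TangentStructure (C : Type u) [Category.{v} C] where
  T : C ⥤ C
  p : T ⟶ 𝟭 C
  T2 : C ⥤ C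
  π0 : T2 ⟶ T
  π1 : T2 ⟶ T
  /-- the chosen object `T2 M` is the pullback of `p` along itself -/
  isPB0 : ∀ M : C, IsPullback (π0.app M) (π1.app M) (p.app M) (p.app M)
  /-- this pullback is preserved by `T` -/
  isPB1 : ∀ M : C, IsPullback (T.map (π0.app M)) (T.map (π1.app M))
      (T.map (p.app M)) (T.map (p.app M))
  /-- and indeed by every power `Tⁿ` -/
  isPBk : ∀ (k : ℕ) (M : C),
    IsPullback ((fpow T k).map (π0.app M)) ((fpow T k).map (π1.app M))
      ((fpow T k).map (p.app M)) ((fpow T k).map (p.app M))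
  /-- all finite wide pullback powers of `p` exist -/
  hasWide : ∀ (n : ℕ) (M : C),
    HasLimit (WidePullbackShape.wideCospan M (fun _ : Fin n => T.obj M) (fun _ => p.app M))
  /-- and are preserved by every power `Tⁿ` -/
  presWide : ∀ (n k : ℕ) (M : C),
    PreservesLimit (WidePullbackShape.wideCospan M (fun _ : Fin n => T.obj M) (fun _ => p.app M))
      (fpow T k)
  add : T2 ⟶ T
  zero : 𝟭 C ⟶ T
  add_p : ∀ M : C, add.app M ≫ p.app M = π0.app M ≫ p.app M
  zero_p : ∀ M : C, zero.app M ≫ p.app M = 𝟙 M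
  add_comm : ∀ {X M : C} (f g : X ⟶ T.obj M) (h : f ≫ p.app M = g ≫ p.app M),
    (isPB0 M).lift f g h ≫ add.app M = (isPB0 M).lift g f h.symm ≫ add.app M
  add_zero : ∀ {X M : C} (f : X ⟶ T.obj M)
    (h : (f ≫ p.app M ≫ zero.app M) ≫ p.app M = f ≫ p.app M),
    (isPB0 M).lift (f ≫ p.app M ≫ zero.app M) f h ≫ add.app M = f
  add_assoc : ∀ {X M : C} (f g h : X ⟶ T.obj M)
    (hfg : f ≫ p.app M = g ≫ p.app M) (hgh : g ≫ p.app M = h ≫ p.app M)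
    (h1 : ((isPB0 M).lift f g hfg ≫ add.app M) ≫ p.app M = h ≫ p.app M)
    (h2 : f ≫ p.app M = ((isPB0 M).lift g h hgh ≫ add.app M) ≫ p.app M),
    (isPB0 M).lift ((isPB0 M).lift f g hfg ≫ add.app M) h h1 ≫ add.app M =
      (isPB0 M).lift f ((isPB0 M).lift g h hgh ≫ add.app M) h2 ≫ add.app M
  l : T ⟶ T ⋙ T
  l_Tp : ∀ M : C, l.app M ≫ T.map (p.app M) = p.app M ≫ zero.app M
  l_zero : ∀ M : C, zero.app M ≫ l.app M = zero.app M ≫ T.map (zero.app M)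
  l_add : ∀ {X M : C} (f g : X ⟶ T.obj M) (h : f ≫ p.app M = g ≫ p.app M)
    (h' : (f ≫ l.app M) ≫ T.map (p.app M) = (g ≫ l.app M) ≫ T.map (p.app M)),
    (isPB0 M).lift f g h ≫ add.app M ≫ l.app M =
      (isPB1 M).lift (f ≫ l.app M) (g ≫ l.app M) h' ≫ T.map (add.app M)
  c : T ⋙ T ⟶ T ⋙ T
  c_p : ∀ M : C, c.app M ≫ p.app (T.obj M) = T.map (p.app M)
  c_zero : ∀ M : C, T.map (zero.app M) ≫ c.app M = zero.app (T.obj M)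
  c_add : ∀ {X M : C} (f g : X ⟶ T.obj (T.obj M))
    (h : f ≫ T.map (p.app M) = g ≫ T.map (p.app M))
    (h' : (f ≫ c.app M) ≫ p.app (T.obj M) = (g ≫ c.app M) ≫ p.app (T.obj M)),
    (isPB1 M).lift f g h ≫ T.map (add.app M) ≫ c.app M =
      (isPB0 (T.obj M)).lift (f ≫ c.app M) (g ≫ c.app M) h' ≫ add.app (T.obj M)
  c_c : ∀ M : C, c.app M ≫ c.app M = 𝟙 _
  l_c : ∀ M : C, l.app M ≫ c.app M = l.app M
  l_l : ∀ M : C, l.app M ≫ T.map (l.app M) = l.app M ≫ l.app (T.obj M)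
  c_coh : ∀ M : C, T.map (c.app M) ≫ c.app (T.obj M) ≫ T.map (c.app M) =
      c.app (T.obj M) ≫ T.map (c.app M) ≫ c.app (T.obj M)
  c_l : ∀ M : C, c.app M ≫ T.map (l.app M) =
      l.app (T.obj M) ≫ T.map (c.app M) ≫ c.app (T.obj M)
  univ : ∀ (k : ℕ) (M : C)
    (h : (π0.app M ≫ l.app M) ≫ T.map (p.app M) =
         (π1.app M ≫ zero.app (T.obj M)) ≫ T.map (p.app M)),
    IsPullback
      ((fpow T k).map ((isPB1 M).lift (π0.app M ≫ l.app M) (π1.app M ≫ zero.app (T.obj M)) h ≫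
        T.map (add.app M)))
      ((fpow T k).map (π0.app M ≫ p.app M))
      ((fpow T k).map (T.map (p.app M)))
      ((fpow T k).map (zero.app M))

namespace TangentStructure

/-- The data of a differential bundle over `M` with total space `E`. -/
structure DiffBundleData (TS : TangentStructure C) (E M : C) where
  q : E ⟶ M
  E2 : C
  p0 : E2 ⟶ E
  p1 : E2 ⟶ E
  σ : E2 ⟶ E
  ζ : M ⟶ E
  lam : E ⟶ TS.T.obj E

variable (TS : TangentStructure C)

/-- The axioms making `D` a differential bundle (without the universality of the lift). -/
structure IsPreDiffBundle {E M : C} (D : TS.DiffBundleData E M) : Prop where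
  isPB0 : IsPullback D.p0 D.p1 D.q D.q
  isPB1 : IsPullback (TS.T.map D.p0) (TS.T.map D.p1) (TS.T.map D.q) (TS.T.map D.q)
  isPBk : ∀ k : ℕ, IsPullback ((fpow TS.T k).map D.p0) ((fpow TS.T k).map D.p1)
      ((fpow TS.T k).map D.q) ((fpow TS.T k).map D.q)
  hasWide : ∀ n : ℕ,
    HasLimit (WidePullbackShape.wideCospan M (fun _ : Fin n => E) (fun _ => D.q))
  presWide : ∀ n k : ℕ,
    PreservesLimit (WidePullbackShape.wideCospan M (fun _ : Fin n => E) (fun _ => D.q))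
      (fpow TS.T k)
  σ_q : D.σ ≫ D.q = D.p0 ≫ D.q
  ζ_q : D.ζ ≫ D.q = 𝟙 M
  σ_comm : ∀ {X : C} (f g : X ⟶ E) (h : f ≫ D.q = g ≫ D.q),
    isPB0.lift f g h ≫ D.σ = isPB0.lift g f h.symm ≫ D.σ
  σ_zero : ∀ {X : C} (f : X ⟶ E) (h : (f ≫ D.q ≫ D.ζ) ≫ D.q = f ≫ D.q),
    isPB0.lift (f ≫ D.q ≫ D.ζ) f h ≫ D.σ = f
  σ_assoc : ∀ {X : C} (f g h : X ⟶ E)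
    (hfg : f ≫ D.q = g ≫ D.q) (hgh : g ≫ D.q = h ≫ D.q)
    (h1 : (isPB0.lift f g hfg ≫ D.σ) ≫ D.q = h ≫ D.q)
    (h2 : f ≫ D.q = (isPB0.lift g h hgh ≫ D.σ) ≫ D.q),
    isPB0.lift (isPB0.lift f g hfg ≫ D.σ) h h1 ≫ D.σ =
      isPB0.lift f (isPB0.lift g h hgh ≫ D.σ) h2 ≫ D.σ
  lam_Tq : D.lam ≫ TS.T.map D.q = D.q ≫ TS.zero.app M
  lam_zero0 : D.ζ ≫ D.lam = TS.zero.app M ≫ TS.T.map D.ζ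
  lam_add0 : ∀ {X : C} (f g : X ⟶ E) (h : f ≫ D.q = g ≫ D.q)
    (h' : (f ≫ D.lam) ≫ TS.T.map D.q = (g ≫ D.lam) ≫ TS.T.map D.q),
    isPB0.lift f g h ≫ D.σ ≫ D.lam =
      isPB1.lift (f ≫ D.lam) (g ≫ D.lam) h' ≫ TS.T.map D.σ
  lam_p : D.lam ≫ TS.p.app E = D.q ≫ D.ζ
  lam_zero1 : D.ζ ≫ D.lam = D.ζ ≫ TS.zero.app E
  lam_add1 : ∀ {X : C} (f g : X ⟶ E) (h : f ≫ D.q = g ≫ D.q)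
    (h' : (f ≫ D.lam) ≫ TS.p.app E = (g ≫ D.lam) ≫ TS.p.app E),
    isPB0.lift f g h ≫ D.σ ≫ D.lam =
      (TS.isPB0 E).lift (f ≫ D.lam) (g ≫ D.lam) h' ≫ TS.add.app E
  lam_l : D.lam ≫ TS.l.app E = D.lam ≫ TS.T.map D.lam

/-- The full axioms for a differential bundle, including the universality of the lift. -/
structure IsDiffBundle {E M : C} (D : TS.DiffBundleData E M)
    extends TS.IsPreDiffBundle D : Prop where
  univ : ∀ (k : ℕ)
    (h : (D.p0 ≫ D.lam) ≫ TS.T.map D.q = (D.p1 ≫ TS.zero.app E) ≫ TS.T.map D.q),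
    IsPullback
      ((fpow TS.T k).map (toIsPreDiffBundle.isPB1.lift (D.p0 ≫ D.lam)
        (D.p1 ≫ TS.zero.app E) h ≫ TS.T.map D.σ))
      ((fpow TS.T k).map (D.p0 ≫ D.q))
      ((fpow TS.T k).map (TS.T.map D.q))
      ((fpow TS.T k).map (TS.zero.app M))

variable {TS}

lemma mu_w {E M : C} {D : TS.DiffBundleData E M} (hD : TS.IsPreDiffBundle D) :
    (D.p0 ≫ D.lam) ≫ TS.T.map D.q = (D.p1 ≫ TS.zero.app E) ≫ TS.T.map D.q := by
  have hz : TS.zero.app E ≫ TS.T.map D.q = D.q ≫ TS.zero.app M := by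
    simpa using (TS.zero.naturality D.q).symm
  rw [Category.assoc, hD.lam_Tq, Category.assoc, hz, ← Category.assoc, ← Category.assoc,
    hD.isPB0.w]

/-- The map `μ = ⟨π₀λ, π₁0⟩T(σ) : E₂ ⟶ TE` of a differential bundle. -/
noncomputable def DiffBundleData.mu {E M : C} (D : TS.DiffBundleData E M)
    (hD : TS.IsPreDiffBundle D) : D.E2 ⟶ TS.T.obj E :=
  hD.isPB1.lift (D.p0 ≫ D.lam) (D.p1 ≫ TS.zero.app E) (mu_w hD) ≫ TS.T.map D.σ

/-- `IsBracket f b` says that `b` satisfies the defining property of the bracket `{f}`: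
`f = ⟨bλ, fp0⟩T(σ)`. -/
def IsBracket {E M : C} (D : TS.DiffBundleData E M)
    (h1 : IsPullback (TS.T.map D.p0) (TS.T.map D.p1) (TS.T.map D.q) (TS.T.map D.q))
    {X : C} (f : X ⟶ TS.T.obj E) (b : X ⟶ E) : Prop :=
  ∃ w, f = h1.lift (b ≫ D.lam) (f ≫ TS.p.app E ≫ TS.zero.app E) w ≫ TS.T.map D.σ

/-- `(f, g)` is a morphism of differential bundles. -/
def IsBundleHom {E M E' M' : C} (D : TS.DiffBundleData E M) (D' : TS.DiffBundleData E' M')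
    (f : E ⟶ E') (g : M ⟶ M') : Prop :=
  f ≫ D'.q = D.q ≫ g

/-- `(f, g)` is a linear morphism of differential bundles. -/
def IsLinearBundleHom {E M E' M' : C} (D : TS.DiffBundleData E M) (D' : TS.DiffBundleData E' M')
    (f : E ⟶ E') (g : M ⟶ M') : Prop :=
  f ≫ D'.q = D.q ≫ g ∧ f ≫ D'.lam = D.lam ≫ TS.T.map f

/-- Applying the tangent functor to a differential bundle. -/
def DiffBundleData.tangent {E M : C} (D : TS.DiffBundleData E M) :
    TS.DiffBundleData (TS.T.obj E) (TS.T.obj M) where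
  q := TS.T.map D.q
  E2 := TS.T.obj D.E2
  p0 := TS.T.map D.p0
  p1 := TS.T.map D.p1
  σ := TS.T.map D.σ
  ζ := TS.T.map D.ζ
  lam := TS.T.map D.lam ≫ TS.c.app E

end TangentStructure


section AuxLemmas

open TangentStructure WidePullbackShape

lemma fpow_succ_eq (T : C ⥤ C) : ∀ k, T ⋙ fpow T k = fpow T (k+1)
  | 0 => rfl
  | k+1 => by
    show T ⋙ (fpow T k ⋙ T) = (fpow T k ⋙ T) ⋙ T
    rw [← Functor.assoc, fpow_succ_eq T k]; rfl

lemma isPullback_of_functor_eq {F G : C ⥤ C} (h : F = G) {P X Y Z : C}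
    {a : P ⟶ X} {b : P ⟶ Y} {f : X ⟶ Z} {g : Y ⟶ Z}
    (H : IsPullback (G.map a) (G.map b) (G.map f) (G.map g)) :
    IsPullback (F.map a) (F.map b) (F.map f) (F.map g) := by subst h; exact H

/-- Universal tool: a lift along a pullback equals any map with the right projections. -/
lemma pb_lift_ext {P X Y Z W : C} {fst : P ⟶ X} {snd : P ⟶ Y} {f : X ⟶ Z} {g : Y ⟶ Z}
    (h : IsPullback fst snd f g) {u : W ⟶ P} {a : W ⟶ X} {b : W ⟶ Y} {w : a ≫ f = b ≫ g}
    (ha : u ≫ fst = a) (hb : u ≫ snd = b) : h.lift a b w = u :=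
  (h.hom_ext (by rw [h.lift_fst, ← ha]) (by rw [h.lift_snd, ← hb])).symm

lemma pb_map_lift (T : C ⥤ C) {P X Y Z W : C} {fst : P ⟶ X} {snd : P ⟶ Y} {f : X ⟶ Z}
    {g : Y ⟶ Z} (h : IsPullback fst snd f g)
    (h' : IsPullback (T.map fst) (T.map snd) (T.map f) (T.map g))
    (a : W ⟶ X) (b : W ⟶ Y) (w : a ≫ f = b ≫ g) :
    T.map (h.lift a b w) =
      h'.lift (T.map a) (T.map b) (by rw [← T.map_comp, ← T.map_comp, w]) :=
  (h'.hom_ext (by rw [h'.lift_fst, ← T.map_comp, h.lift_fst])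
    (by rw [h'.lift_snd, ← T.map_comp, h.lift_snd])).symm

section WideAux
variable (T : C ⥤ C) {B E : C} (n : ℕ) (q : E ⟶ B)

/-- The image of a wide cospan under a functor, as a wide cospan. -/
def wideIso : (WidePullbackShape.wideCospan B (fun _ : Fin n => E) (fun _ => q)) ⋙ T ≅
    WidePullbackShape.wideCospan (T.obj B) (fun _ : Fin n => T.obj E) (fun _ => T.map q) :=
  NatIso.ofComponents (fun j => eqToIso (by cases j <;> rfl))
    (by intro X Y f
        change WidePullbackShape.Hom X Y at f
        cases f with
        | id =>
          cases X
          · show T.map (𝟙 B) ≫ eqToHom rfl = eqToHom rfl ≫ 𝟙 (T.obj B); simp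
          · show T.map (𝟙 E) ≫ eqToHom rfl = eqToHom rfl ≫ 𝟙 (T.obj E); simp
        | term j =>
          show T.map q ≫ eqToHom rfl = eqToHom rfl ≫ T.map q; simp)

variable (hasW : HasLimit (WidePullbackShape.wideCospan B (fun _ : Fin n => E) (fun _ => q)))
variable (presW : ∀ k, PreservesLimit
    (WidePullbackShape.wideCospan B (fun _ : Fin n => E) (fun _ => q)) (fpow T k))

include hasW presW in
lemma presWideT (k : ℕ) : PreservesLimit
    (WidePullbackShape.wideCospan (T.obj B) (fun _ : Fin n => T.obj E) (fun _ => T.map q))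
    (fpow T k) := by
  have h1 : PreservesLimit (WidePullbackShape.wideCospan B (fun _ : Fin n => E) (fun _ => q)) T :=
    presW 1
  have hc := limit.isLimit (WidePullbackShape.wideCospan B (fun _ : Fin n => E) (fun _ => q))
  have h2 : PreservesLimit
      ((WidePullbackShape.wideCospan B (fun _ : Fin n => E) (fun _ => q)) ⋙ T) (fpow T k) := by
    refine preservesLimit_of_preserves_limit_cone (isLimitOfPreserves T hc) ?_
    show IsLimit ((T ⋙ fpow T k).mapCone (limit.cone _))
    rw [fpow_succ_eq]
    exact isLimitOfPreserves _ hc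
  exact preservesLimit_of_iso_diagram (fpow T k) (wideIso T n q)

include hasW presW in
lemma hasWideT : HasLimit
    (WidePullbackShape.wideCospan (T.obj B) (fun _ : Fin n => T.obj E) (fun _ => T.map q)) := by
  have h1 : PreservesLimit (WidePullbackShape.wideCospan B (fun _ : Fin n => E) (fun _ => q)) T :=
    presW 1
  have : HasLimit ((WidePullbackShape.wideCospan B (fun _ : Fin n => E) (fun _ => q)) ⋙ T) :=
    ⟨⟨⟨_, isLimitOfPreserves T (limit.isLimit _)⟩⟩⟩
  exact hasLimit_of_iso (wideIso T n q)

end WideAux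

variable (TS : TangentStructure C)

lemma c_nat {X Y : C} (u : X ⟶ Y) :
    TS.T.map (TS.T.map u) ≫ TS.c.app Y = TS.c.app X ≫ TS.T.map (TS.T.map u) :=
  TS.c.naturality u

lemma zero_nat {X Y : C} (u : X ⟶ Y) :
    u ≫ TS.zero.app Y = TS.zero.app X ≫ TS.T.map u :=
  TS.zero.naturality u

end AuxLemmas

open TangentStructure in
/-- If `q` is a differential bundle in a tangent category then so is
`T(q) = (T(q), T(σ), T(ζ), T(λ)c)`. -/
theorem tangent_of_diffBundle (TS : TangentStructure C) {E M : C}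
    (D : TS.DiffBundleData E M) (hD : TS.IsDiffBundle D) :
    TS.IsDiffBundle D.tangent := by
  -- the pullback `T(E₂)` over `TE`
  have P1 := hD.isPB1
  -- `T²` of the base pullback
  have tPB1 : IsPullback (TS.T.map (TS.T.map D.p0)) (TS.T.map (TS.T.map D.p1))
      (TS.T.map (TS.T.map D.q)) (TS.T.map (TS.T.map D.q)) :=
    isPullback_of_functor_eq (fpow_succ_eq TS.T 1) (hD.isPBk 2)
  -- identity lift for the base pullback
  have hid : ∀ w, hD.isPB0.lift D.p0 D.p1 w = 𝟙 D.E2 := fun w =>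
    pb_lift_ext hD.isPB0 (Category.id_comp _) (Category.id_comp _)
  refine
    { toIsPreDiffBundle :=
      { isPB0 := hD.isPB1
        isPB1 := tPB1
        isPBk := fun k => isPullback_of_functor_eq (fpow_succ_eq TS.T k) (hD.isPBk (k+1))
        hasWide := fun n => hasWideT TS.T n D.q (hD.hasWide n) (hD.presWide n)
        presWide := fun n k => presWideT TS.T n D.q (hD.hasWide n) (hD.presWide n) k
        σ_q := ?_
        ζ_q := ?_
        σ_comm := ?_
        σ_zero := ?_
        σ_assoc := ?_
        lam_Tq := ?_
        lam_zero0 := ?_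
        lam_add0 := ?_
        lam_p := ?_
        lam_zero1 := ?_
        lam_add1 := ?_
        lam_l := ?_ }
      univ := ?_ }
  case refine_1 =>
    show TS.T.map D.σ ≫ TS.T.map D.q = TS.T.map D.p0 ≫ TS.T.map D.q
    rw [← TS.T.map_comp, ← TS.T.map_comp, hD.σ_q]
  case refine_2 =>
    show TS.T.map D.ζ ≫ TS.T.map D.q = 𝟙 (TS.T.obj M)
    rw [← TS.T.map_comp, hD.ζ_q, TS.T.map_id]
  case refine_3 =>
    intro X f g h
    replace h : f ≫ TS.T.map D.q = g ≫ TS.T.map D.q := h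
    show hD.isPB1.lift f g h ≫ TS.T.map D.σ = hD.isPB1.lift g f h.symm ≫ TS.T.map D.σ
    have hsw : hD.isPB0.lift D.p1 D.p0 hD.isPB0.w.symm ≫ D.σ = D.σ := by
      have h1 := hD.σ_comm D.p1 D.p0 hD.isPB0.w.symm
      rw [h1, hid, Category.id_comp]
    have e : hD.isPB1.lift g f h.symm =
        hD.isPB1.lift f g h ≫ TS.T.map (hD.isPB0.lift D.p1 D.p0 hD.isPB0.w.symm) := by
      apply pb_lift_ext
      · rw [Category.assoc, ← TS.T.map_comp, hD.isPB0.lift_fst, hD.isPB1.lift_snd]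
      · rw [Category.assoc, ← TS.T.map_comp, hD.isPB0.lift_snd, hD.isPB1.lift_fst]
    rw [e, Category.assoc, ← TS.T.map_comp, hsw]
  case refine_4 =>
    intro X f h
    show hD.isPB1.lift (f ≫ TS.T.map D.q ≫ TS.T.map D.ζ) f h ≫ TS.T.map D.σ = f
    have w0 : (𝟙 E ≫ D.q ≫ D.ζ) ≫ D.q = 𝟙 E ≫ D.q := by simp [hD.ζ_q]
    have base := hD.σ_zero (𝟙 E) w0
    have e : hD.isPB1.lift (f ≫ TS.T.map D.q ≫ TS.T.map D.ζ) f h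
        = f ≫ TS.T.map (hD.isPB0.lift (𝟙 E ≫ D.q ≫ D.ζ) (𝟙 E) w0) := by
      apply pb_lift_ext
      · rw [Category.assoc, ← TS.T.map_comp, hD.isPB0.lift_fst]
        simp
      · rw [Category.assoc, ← TS.T.map_comp, hD.isPB0.lift_snd]
        simp
    rw [e, Category.assoc, ← TS.T.map_comp, base, TS.T.map_id, Category.comp_id]
  case refine_6 =>
    show (TS.T.map D.lam ≫ TS.c.app E) ≫ TS.T.map (TS.T.map D.q) =
      TS.T.map D.q ≫ TS.zero.app (TS.T.obj M)
    rw [Category.assoc, ← c_nat TS D.q, ← Category.assoc, ← TS.T.map_comp, hD.lam_Tq,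
      TS.T.map_comp, Category.assoc, TS.c_zero]
  case refine_7 =>
    show TS.T.map D.ζ ≫ TS.T.map D.lam ≫ TS.c.app E =
      TS.zero.app (TS.T.obj M) ≫ TS.T.map (TS.T.map D.ζ)
    rw [← Category.assoc, ← TS.T.map_comp, hD.lam_zero0, TS.T.map_comp, Category.assoc,
      c_nat TS D.ζ, ← Category.assoc, TS.c_zero]
  case refine_9 =>
    show (TS.T.map D.lam ≫ TS.c.app E) ≫ TS.p.app (TS.T.obj E) = TS.T.map D.q ≫ TS.T.map D.ζ
    rw [Category.assoc, TS.c_p, ← TS.T.map_comp, hD.lam_p, TS.T.map_comp]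
  case refine_10 =>
    show TS.T.map D.ζ ≫ TS.T.map D.lam ≫ TS.c.app E = TS.T.map D.ζ ≫ TS.zero.app (TS.T.obj E)
    rw [← Category.assoc, ← TS.T.map_comp, hD.lam_zero1, TS.T.map_comp, Category.assoc,
      TS.c_zero]
  case refine_12 =>
    show (TS.T.map D.lam ≫ TS.c.app E) ≫ TS.l.app (TS.T.obj E) =
      (TS.T.map D.lam ≫ TS.c.app E) ≫ TS.T.map (TS.T.map D.lam ≫ TS.c.app E)
    have hTc2 : TS.T.map (TS.c.app E) ≫ TS.T.map (TS.c.app E) = 𝟙 _ := by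
      rw [← TS.T.map_comp, TS.c_c, TS.T.map_id]
    haveI : IsIso (TS.T.map (TS.c.app E)) := ⟨TS.T.map (TS.c.app E), hTc2, hTc2⟩
    haveI : IsIso (TS.c.app (TS.T.obj E)) := ⟨TS.c.app _, TS.c_c _, TS.c_c _⟩
    have key : TS.c.app E ≫ TS.l.app (TS.T.obj E) =
        TS.T.map (TS.l.app E) ≫ TS.c.app (TS.T.obj E) ≫ TS.T.map (TS.c.app E) := by
      rw [← cancel_mono (TS.T.map (TS.c.app E)), ← cancel_mono (TS.c.app (TS.T.obj E))]
      simp only [Category.assoc]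
      rw [← TS.c_l]
      slice_lhs 1 2 => rw [TS.c_c]
      slice_rhs 3 4 => rw [hTc2]
      simp [TS.c_c]
    rw [Category.assoc, key, TS.T.map_comp]
    slice_lhs 1 2 => rw [← TS.T.map_comp, hD.lam_l, TS.T.map_comp]
    slice_rhs 2 3 => rw [← c_nat TS D.lam]
    simp only [Category.assoc]
  case refine_8 =>
    intro X f g h h'
    replace h : f ≫ TS.T.map D.q = g ≫ TS.T.map D.q := h
    show hD.isPB1.lift f g h ≫ TS.T.map D.σ ≫ (TS.T.map D.lam ≫ TS.c.app E) =
      tPB1.lift (f ≫ (TS.T.map D.lam ≫ TS.c.app E)) (g ≫ (TS.T.map D.lam ≫ TS.c.app E)) h' ≫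
        TS.T.map (TS.T.map D.σ)
    have wV : (D.p0 ≫ D.lam) ≫ TS.T.map D.q = (D.p1 ≫ D.lam) ≫ TS.T.map D.q := by
      simp only [Category.assoc, hD.lam_Tq]
      simp only [← Category.assoc]
      rw [hD.isPB0.w]
    have key : D.σ ≫ D.lam =
        hD.isPB1.lift (D.p0 ≫ D.lam) (D.p1 ≫ D.lam) wV ≫ TS.T.map D.σ := by
      have hb := hD.lam_add0 D.p0 D.p1 hD.isPB0.w wV
      rwa [hid, Category.id_comp] at hb
    have e : tPB1.lift (f ≫ (TS.T.map D.lam ≫ TS.c.app E)) (g ≫ (TS.T.map D.lam ≫ TS.c.app E)) h'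
        = hD.isPB1.lift f g h ≫
            TS.T.map (hD.isPB1.lift (D.p0 ≫ D.lam) (D.p1 ≫ D.lam) wV) ≫ TS.c.app D.E2 := by
      apply pb_lift_ext
      · slice_lhs 3 4 => rw [← c_nat TS D.p0]
        slice_lhs 2 3 => rw [← TS.T.map_comp, hD.isPB1.lift_fst]
        rw [TS.T.map_comp]
        slice_lhs 1 2 => rw [hD.isPB1.lift_fst]
        simp only [Category.assoc]
      · slice_lhs 3 4 => rw [← c_nat TS D.p1]
        slice_lhs 2 3 => rw [← TS.T.map_comp, hD.isPB1.lift_snd]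
        rw [TS.T.map_comp]
        slice_lhs 1 2 => rw [hD.isPB1.lift_snd]
        simp only [Category.assoc]
    rw [e]
    slice_lhs 2 3 => rw [← TS.T.map_comp, key, TS.T.map_comp]
    slice_lhs 3 4 => rw [c_nat TS D.σ]
    simp only [Category.assoc]
  case refine_11 =>
    intro X f g h h'
    replace h : f ≫ TS.T.map D.q = g ≫ TS.T.map D.q := h
    show hD.isPB1.lift f g h ≫ TS.T.map D.σ ≫ (TS.T.map D.lam ≫ TS.c.app E) =
      (TS.isPB0 (TS.T.obj E)).lift (f ≫ (TS.T.map D.lam ≫ TS.c.app E))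
        (g ≫ (TS.T.map D.lam ≫ TS.c.app E)) h' ≫ TS.add.app (TS.T.obj E)
    have wA : (D.p0 ≫ D.lam) ≫ TS.p.app E = (D.p1 ≫ D.lam) ≫ TS.p.app E := by
      simp only [Category.assoc, hD.lam_p]
      simp only [← Category.assoc]
      rw [hD.isPB0.w]
    have keyA : D.σ ≫ D.lam =
        (TS.isPB0 E).lift (D.p0 ≫ D.lam) (D.p1 ≫ D.lam) wA ≫ TS.add.app E := by
      have hb := hD.lam_add1 D.p0 D.p1 hD.isPB0.w wA
      rwa [hid, Category.id_comp] at hb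
    have wA' : TS.T.map (D.p0 ≫ D.lam) ≫ TS.T.map (TS.p.app E) =
        TS.T.map (D.p1 ≫ D.lam) ≫ TS.T.map (TS.p.app E) := by
      rw [← TS.T.map_comp, ← TS.T.map_comp, wA]
    have wA'' : (TS.T.map (D.p0 ≫ D.lam) ≫ TS.c.app E) ≫ TS.p.app (TS.T.obj E) =
        (TS.T.map (D.p1 ≫ D.lam) ≫ TS.c.app E) ≫ TS.p.app (TS.T.obj E) := by
      rw [Category.assoc, Category.assoc, TS.c_p, wA']
    have eA := pb_map_lift TS.T (TS.isPB0 E) (TS.isPB1 E) (D.p0 ≫ D.lam) (D.p1 ≫ D.lam) wA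
    have hcadd := TS.c_add (TS.T.map (D.p0 ≫ D.lam)) (TS.T.map (D.p1 ≫ D.lam)) wA' wA''
    have e2 : (TS.isPB0 (TS.T.obj E)).lift (f ≫ (TS.T.map D.lam ≫ TS.c.app E))
          (g ≫ (TS.T.map D.lam ≫ TS.c.app E)) h' =
        hD.isPB1.lift f g h ≫ (TS.isPB0 (TS.T.obj E)).lift
          (TS.T.map (D.p0 ≫ D.lam) ≫ TS.c.app E) (TS.T.map (D.p1 ≫ D.lam) ≫ TS.c.app E) wA'' := by
      apply pb_lift_ext
      · slice_lhs 2 3 => rw [(TS.isPB0 (TS.T.obj E)).lift_fst]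
        rw [TS.T.map_comp]
        slice_lhs 1 2 => rw [hD.isPB1.lift_fst]
        simp only [Category.assoc]
      · slice_lhs 2 3 => rw [(TS.isPB0 (TS.T.obj E)).lift_snd]
        rw [TS.T.map_comp]
        slice_lhs 1 2 => rw [hD.isPB1.lift_snd]
        simp only [Category.assoc]
    slice_lhs 2 3 => rw [← TS.T.map_comp, keyA, TS.T.map_comp]
    rw [eA]
    simp only [Category.assoc]
    rw [hcadd, e2]
    simp only [Category.assoc]
  case refine_5 =>
    intro X f g h hfg hgh h1 h2
    replace hfg : f ≫ TS.T.map D.q = g ≫ TS.T.map D.q := hfg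
    replace hgh : g ≫ TS.T.map D.q = h ≫ TS.T.map D.q := hgh
    haveI := hD.hasWide 3
    haveI : PreservesLimit
        (WidePullbackShape.wideCospan M (fun _ : Fin 3 => E) (fun _ => D.q)) TS.T :=
      hD.presWide 3 1
    have hc3 := limit.isLimit (WidePullbackShape.wideCospan M (fun _ : Fin 3 => E) (fun _ => D.q))
    have hTc3 : IsLimit (TS.T.mapCone
        (limit.cone (WidePullbackShape.wideCospan M (fun _ : Fin 3 => E) (fun _ => D.q)))) :=
      isLimitOfPreserves TS.T hc3
    set F3 := WidePullbackShape.wideCospan M (fun _ : Fin 3 => E) (fun _ => D.q) with hF3def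
    have wpi : ∀ i : Fin 3, limit.π F3 (some i) ≫ D.q = limit.π F3 none := fun i =>
      limit.w F3 (WidePullbackShape.Hom.term i)
    have hπ3w : ∀ j : Fin 3, (![f, g, h] : Fin 3 → (X ⟶ TS.T.obj E)) j ≫
        (F3 ⋙ TS.T).map (WidePullbackShape.Hom.term j) = f ≫ TS.T.map D.q := by
      intro j
      fin_cases j
      · rfl
      · exact hfg.symm
      · exact (hfg.trans hgh).symm
    set s : Cone (F3 ⋙ TS.T) :=
      WidePullbackShape.mkCone (f ≫ TS.T.map D.q) (![f, g, h]) hπ3w with hsdef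
    set u := hTc3.lift s with hudef
    have hu : ∀ j : Fin 3, u ≫ TS.T.map (limit.π F3 (some j)) =
        (![f, g, h] : Fin 3 → (X ⟶ TS.T.obj E)) j := fun j => hTc3.fac s (some j)
    have hu0 : u ≫ TS.T.map (limit.π F3 (some 0)) = f := hu 0
    have hu1 : u ≫ TS.T.map (limit.π F3 (some 1)) = g := hu 1
    have hu2 : u ≫ TS.T.map (limit.π F3 (some 2)) = h := hu 2
    have w01 : limit.π F3 (some 0) ≫ D.q = limit.π F3 (some 1) ≫ D.q :=
      (wpi 0).trans (wpi 1).symm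
    have w12 : limit.π F3 (some 1) ≫ D.q = limit.π F3 (some 2) ≫ D.q :=
      (wpi 1).trans (wpi 2).symm
    have wb1 : (hD.isPB0.lift _ _ w01 ≫ D.σ) ≫ D.q = limit.π F3 (some 2) ≫ D.q := by
      erw [Category.assoc, hD.σ_q, ← Category.assoc, hD.isPB0.lift_fst, wpi 0, wpi 2]
    have wb2 : limit.π F3 (some 0) ≫ D.q = (hD.isPB0.lift _ _ w12 ≫ D.σ) ≫ D.q := by
      erw [Category.assoc, hD.σ_q, ← Category.assoc, hD.isPB0.lift_fst, wpi 0, wpi 1]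
    have base := hD.σ_assoc _ _ _ w01 w12 wb1 wb2
    have e01 : hD.isPB1.lift f g hfg = u ≫ TS.T.map (hD.isPB0.lift _ _ w01) := by
      apply pb_lift_ext
      · erw [Category.assoc, ← TS.T.map_comp, hD.isPB0.lift_fst, hu0]
      · erw [Category.assoc, ← TS.T.map_comp, hD.isPB0.lift_snd, hu1]
    have e12 : hD.isPB1.lift g h hgh = u ≫ TS.T.map (hD.isPB0.lift _ _ w12) := by
      apply pb_lift_ext
      · erw [Category.assoc, ← TS.T.map_comp, hD.isPB0.lift_fst, hu1]
      · erw [Category.assoc, ← TS.T.map_comp, hD.isPB0.lift_snd, hu2]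
    have eL : hD.isPB1.lift (hD.isPB1.lift f g hfg ≫ TS.T.map D.σ) h h1 =
        u ≫ TS.T.map (hD.isPB0.lift _ _ wb1) := by
      apply pb_lift_ext
      · erw [Category.assoc, ← TS.T.map_comp, hD.isPB0.lift_fst, TS.T.map_comp,
          ← Category.assoc, ← e01]
      · erw [Category.assoc, ← TS.T.map_comp, hD.isPB0.lift_snd, hu2]
    have eR : hD.isPB1.lift f (hD.isPB1.lift g h hgh ≫ TS.T.map D.σ) h2 =
        u ≫ TS.T.map (hD.isPB0.lift _ _ wb2) := by
      apply pb_lift_ext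
      · erw [Category.assoc, ← TS.T.map_comp, hD.isPB0.lift_fst, hu0]
      · erw [Category.assoc, ← TS.T.map_comp, hD.isPB0.lift_snd, TS.T.map_comp,
          ← Category.assoc, ← e12]
    show hD.isPB1.lift (hD.isPB1.lift f g hfg ≫ TS.T.map D.σ) h h1 ≫ TS.T.map D.σ =
      hD.isPB1.lift f (hD.isPB1.lift g h hgh ≫ TS.T.map D.σ) h2 ≫ TS.T.map D.σ
    erw [eL, eR, Category.assoc, Category.assoc, ← TS.T.map_comp, ← TS.T.map_comp, base]
  case refine_13 =>
    intro k h
    replace h : (TS.T.map D.p0 ≫ (TS.T.map D.lam ≫ TS.c.app E)) ≫ TS.T.map (TS.T.map D.q) =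
      (TS.T.map D.p1 ≫ TS.zero.app (TS.T.obj E)) ≫ TS.T.map (TS.T.map D.q) := h
    have e1 : tPB1.lift (TS.T.map D.p0 ≫ (TS.T.map D.lam ≫ TS.c.app E))
          (TS.T.map D.p1 ≫ TS.zero.app (TS.T.obj E)) h =
        TS.T.map (hD.isPB1.lift (D.p0 ≫ D.lam) (D.p1 ≫ TS.zero.app E) (mu_w hD.toIsPreDiffBundle)) ≫
          TS.c.app D.E2 := by
      apply pb_lift_ext
      · slice_lhs 2 3 => rw [← c_nat TS D.p0]
        slice_lhs 1 2 => rw [← TS.T.map_comp, hD.isPB1.lift_fst]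
        rw [TS.T.map_comp]
        simp only [Category.assoc]
      · slice_lhs 2 3 => rw [← c_nat TS D.p1]
        slice_lhs 1 2 => rw [← TS.T.map_comp, hD.isPB1.lift_snd]
        rw [TS.T.map_comp]
        simp only [Category.assoc]
        rw [TS.c_zero]
    have etop : tPB1.lift (TS.T.map D.p0 ≫ (TS.T.map D.lam ≫ TS.c.app E))
          (TS.T.map D.p1 ≫ TS.zero.app (TS.T.obj E)) h ≫ TS.T.map (TS.T.map D.σ) =
        TS.T.map (hD.isPB1.lift (D.p0 ≫ D.lam) (D.p1 ≫ TS.zero.app E) (mu_w hD.toIsPreDiffBundle) ≫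
          TS.T.map D.σ) ≫ TS.c.app E := by
      rw [e1, Category.assoc, ← c_nat TS D.σ, ← Category.assoc, ← TS.T.map_comp]
    show IsPullback
      ((fpow TS.T k).map (tPB1.lift (TS.T.map D.p0 ≫ (TS.T.map D.lam ≫ TS.c.app E))
          (TS.T.map D.p1 ≫ TS.zero.app (TS.T.obj E)) h ≫ TS.T.map (TS.T.map D.σ)))
      ((fpow TS.T k).map (TS.T.map D.p0 ≫ TS.T.map D.q))
      ((fpow TS.T k).map (TS.T.map (TS.T.map D.q)))
      ((fpow TS.T k).map (TS.zero.app (TS.T.obj M)))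
    rw [etop, ← TS.T.map_comp D.p0 D.q,
      show TS.zero.app (TS.T.obj M) = TS.T.map (TS.zero.app M) ≫ TS.c.app M from
        (TS.c_zero M).symm,
      (fpow TS.T k).map_comp, (fpow TS.T k).map_comp]
    have base : IsPullback
        ((fpow TS.T k).map (TS.T.map (hD.isPB1.lift (D.p0 ≫ D.lam) (D.p1 ≫ TS.zero.app E)
          (mu_w hD.toIsPreDiffBundle) ≫ TS.T.map D.σ)))
        ((fpow TS.T k).map (TS.T.map (D.p0 ≫ D.q)))
        ((fpow TS.T k).map (TS.T.map (TS.T.map D.q)))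
        ((fpow TS.T k).map (TS.T.map (TS.zero.app M))) :=
      isPullback_of_functor_eq (fpow_succ_eq TS.T k) (hD.univ (k+1) (mu_w hD.toIsPreDiffBundle))
    have cInv : ∀ Z : C, (fpow TS.T k).map (TS.c.app Z) ≫ (fpow TS.T k).map (TS.c.app Z) =
        𝟙 _ := fun Z => by rw [← (fpow TS.T k).map_comp, TS.c_c, (fpow TS.T k).map_id]
    refine base.of_iso (Iso.refl _)
      (Iso.mk ((fpow TS.T k).map (TS.c.app E)) ((fpow TS.T k).map (TS.c.app E))
        (cInv E) (cInv E))
      (Iso.refl _)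
      (Iso.mk ((fpow TS.T k).map (TS.c.app M)) ((fpow TS.T k).map (TS.c.app M))
        (cInv M) (cInv M)) ?_ ?_ ?_ ?_
    · simp
    · simp
    · show (fpow TS.T k).map (TS.T.map (TS.T.map D.q)) ≫ (fpow TS.T k).map (TS.c.app M) =
        (fpow TS.T k).map (TS.c.app E) ≫ (fpow TS.T k).map (TS.T.map (TS.T.map D.q))
      rw [← (fpow TS.T k).map_comp, ← (fpow TS.T k).map_comp, c_nat TS D.q]
    · simp
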